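/- Let P ∈ k[x,y] be square-free as a polynomial in y over k(x) (i.e., gcd(P, ∂P/∂y) = 1 in k(x)[y]) with deg_y P = r ≥ 1. Then for any root α of P in an algebraic closure of k(x), and for every i ≥ 1, the i-th derivative α^{(i)} (with respect to the unique extension of d/dx) can be written as C_i(x, α)/P_y(x, α)^{2i−1} for a polynomial C_i ∈ k[x,y] independent of the choice of root α, where P_y = ∂P/∂y. -/

import Mathlib

open Polynomial

noncomputable section

/-- Normalization on a field: every nonzero element normalizes to `1`. -/
noncomputable def fieldNormalizationMonoid (K : Type*) [Field K] : NormalizationMonoid K := by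
  classical
  exact
  { normUnit := fun a => if h : a = 0 then 1 else (Units.mk0 a h)⁻¹
    normUnit_zero := dif_pos rfl
    normUnit_one := by
      rw [dif_neg one_ne_zero]
      exact Units.ext (by simp)
    normUnit_mul_units := fun {a} u ha => by
      rw [dif_neg (mul_ne_zero ha u.ne_zero), dif_neg ha]
      exact Units.ext (by
        simp only [Units.val_mul, Units.val_inv_eq_inv_val, Units.val_mk0, mul_inv_rev]) }

attribute [local instance] fieldNormalizationMonoid

noncomputable local instance (K : Type*) [Field K] : NormalizedGCDMonoid (Polynomial K) :=
  UniqueFactorizationMonoid.toNormalizedGCDMonoid _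

variable {k : Type*} [Field k] [CharZero k]

/-- The ℓ-th determinantal denominator of a rational matrix: the monic least common
denominator of all minors of size at most ℓ. -/
def detDen {n p : ℕ} (R : Matrix (Fin n) (Fin p) (RatFunc k)) (ℓ : ℕ) : Polynomial k :=
  (Finset.range (ℓ + 1)).lcm fun i =>
    (Finset.univ : Finset ((Fin i ↪ Fin n) × (Fin i ↪ Fin p))).lcm fun fg =>
      (Matrix.det fun a b => R (fg.1 a) (fg.2 b)).denom

/-- Derivative of a rational function. -/
def rfDeriv (f : RatFunc k) : RatFunc k :=
  algebraMap (Polynomial k) (RatFunc k)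
      (Polynomial.derivative f.num * f.denom - f.num * Polynomial.derivative f.denom) /
    algebraMap (Polynomial k) (RatFunc k) (f.denom ^ 2)

/-- The derivation `p(x) d/dx` on `k(x)`. -/
def pDeriv (p : Polynomial k) (f : RatFunc k) : RatFunc k :=
  algebraMap (Polynomial k) (RatFunc k) p * rfDeriv f

/-- Entrywise action of the derivation `p(x) d/dx` on vectors. -/
def pDerivVec {n : ℕ} (p : Polynomial k) (v : Fin n → RatFunc k) : Fin n → RatFunc k :=
  fun i => pDeriv p (v i)

/-- The pseudo-linear map `θ = D + T` on `k(x)^n`, `θ(v) = D(v) + T v`. -/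
def pseudoLinDiff {n : ℕ} (p : Polynomial k) (T : Matrix (Fin n) (Fin n) (RatFunc k))
    (v : Fin n → RatFunc k) : Fin n → RatFunc k :=
  pDerivVec p v + T.mulVec v


/-- Coefficient-wise derivative (w.r.t. `x`) of a polynomial in `k[x][y]`. -/
def coeffDeriv {R : Type*} [CommSemiring R] (Q : Polynomial (Polynomial R)) :
    Polynomial (Polynomial R) :=
  Q.sum fun n c => Polynomial.monomial n (Polynomial.derivative c)

theorem coeffDeriv_monomial {R : Type*} [CommSemiring R] (n : ℕ) (c : Polynomial R) :
    coeffDeriv (Polynomial.monomial n c) = Polynomial.monomial n (Polynomial.derivative c) := by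
  unfold coeffDeriv
  exact Polynomial.sum_monomial_index c _ (by simp)

theorem coeffDeriv_add {R : Type*} [CommSemiring R] (p q : Polynomial (Polynomial R)) :
    coeffDeriv (p + q) = coeffDeriv p + coeffDeriv q := by
  unfold coeffDeriv
  exact Polynomial.sum_add_index p q _ (by simp) (by intros; simp [map_add])

/-- Let `P ∈ k[x][y]` be square-free in `y` over `k(x)` with `deg_y P ≥ 1`, and let `K` be a
field extension of `k(x)` endowed with a derivation `d` extending `d/dx`. Then for every
`i ≥ 1` there is a polynomial `C_i ∈ k[x][y]`, independent of the root, such that every root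
`α ∈ K` of `P` satisfies `α^{(i)} = C_i(x,α)/P_y(x,α)^{2i−1}`. -/
theorem derivative_algebraic_root (K : Type*) [Field K] (φ0 : RatFunc k →+* K)
    (d : K → K) (hd_add : ∀ a b : K, d (a + b) = d a + d b)
    (hd_mul : ∀ a b : K, d (a * b) = d a * b + a * d b)
    (hd_ext : ∀ f : RatFunc k, d (φ0 f) = φ0 (rfDeriv f))
    (P : Polynomial (Polynomial k)) (hdeg : 1 ≤ P.natDegree)
    (hsqf : IsCoprime (P.map (algebraMap (Polynomial k) (RatFunc k)))
      ((Polynomial.derivative P).map (algebraMap (Polynomial k) (RatFunc k)))) :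
    ∀ i : ℕ, 1 ≤ i → ∃ C : Polynomial (Polynomial k),
      ∀ α : K, Polynomial.eval₂ (φ0.comp (algebraMap (Polynomial k) (RatFunc k))) α P = 0 →
        d^[i] α =
          Polynomial.eval₂ (φ0.comp (algebraMap (Polynomial k) (RatFunc k))) α C /
            (Polynomial.eval₂ (φ0.comp (algebraMap (Polynomial k) (RatFunc k))) α
                (Polynomial.derivative P)) ^ (2 * i - 1) := by
  classical
  set ψ : Polynomial k →+* K := φ0.comp (algebraMap (Polynomial k) (RatFunc k)) with hψ
  set E : Polynomial (Polynomial k) → K → K := fun Q α => Polynomial.eval₂ ψ α Q with hE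
  have hd0 : d 0 = 0 := by
    have h := hd_add 0 0
    rw [add_zero] at h
    exact (left_eq_add.mp h)
  have hd1 : d 1 = 0 := by
    have h := hd_mul 1 1
    simp only [mul_one, one_mul] at h
    exact (left_eq_add.mp h)
  have hdpow : ∀ (a : K) (n : ℕ), d (a ^ (n + 1)) = (n + 1 : K) * a ^ n * d a := by
    intro a n
    induction n with
    | zero => simp
    | succ m ih =>
      have h : a ^ (m + 2) = a ^ (m + 1) * a := by ring
      rw [h, hd_mul, ih]
      push_cast
      ring
  have hquot : ∀ u v : K, v ≠ 0 → d (u / v) = (d u * v - u * d v) / v ^ 2 := by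
    intro u v hv
    have h : u / v * v = u := div_mul_cancel₀ u hv
    have h2 := hd_mul (u / v) v
    rw [h] at h2
    rw [eq_div_iff (pow_ne_zero 2 hv)]
    have h3 : d (u / v) * v = d u - u / v * d v := by
      rw [h2]; ring
    have h4 : u / v * d v * v = u * d v := by
      field_simp
    calc d (u / v) * v ^ 2 = (d (u / v) * v) * v := by ring
      _ = (d u - u / v * d v) * v := by rw [h3]
      _ = d u * v - u / v * d v * v := by ring
      _ = d u * v - u * d v := by rw [h4]
  have hdψ : ∀ c : Polynomial k, d (ψ c) = ψ (Polynomial.derivative c) := by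
    intro c
    have h1 : ψ c = φ0 (algebraMap (Polynomial k) (RatFunc k) c) := rfl
    rw [h1, hd_ext]
    have h2 : rfDeriv (algebraMap (Polynomial k) (RatFunc k) c) =
        algebraMap (Polynomial k) (RatFunc k) (Polynomial.derivative c) := by
      unfold rfDeriv
      rw [RatFunc.num_algebraMap, RatFunc.denom_algebraMap]
      simp
    rw [h2]
    rfl
  have hevald : ∀ (Q : Polynomial (Polynomial k)) (α : K),
      d (E Q α) = E (coeffDeriv Q) α + E (Polynomial.derivative Q) α * d α := by
    intro Q α
    induction Q using Polynomial.induction_on' with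
    | add p q hp hq =>
      simp only [hE] at *
      rw [Polynomial.eval₂_add, hd_add, hp, hq, coeffDeriv_add, Polynomial.eval₂_add,
        Polynomial.derivative_add, Polynomial.eval₂_add]
      ring
    | monomial n c =>
      simp only [hE]
      rw [Polynomial.eval₂_monomial, coeffDeriv_monomial, Polynomial.eval₂_monomial,
        Polynomial.derivative_monomial, Polynomial.eval₂_monomial]
      cases n with
      | zero =>
        simp [hd_mul, hd1, hdψ]
      | succ m =>
        rw [hd_mul, hdpow, hdψ]
        have h : ψ (c * (↑(m + 1) : Polynomial k)) = ψ c * ((m : K) + 1) := by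
          rw [map_mul]
          push_cast
          simp
        simp only [Nat.add_sub_cancel, h]
        push_cast
        ring
  have hPy : ∀ α : K, E P α = 0 → E (Polynomial.derivative P) α ≠ 0 := by
    intro α hα
    obtain ⟨u, v, huv⟩ := hsqf
    have h := congrArg (Polynomial.eval₂ φ0 α) huv
    rw [Polynomial.eval₂_add, Polynomial.eval₂_mul, Polynomial.eval₂_mul,
      Polynomial.eval₂_map, Polynomial.eval₂_map, Polynomial.eval₂_one] at h
    intro hzero
    have hPα : Polynomial.eval₂ (φ0.comp (algebraMap (Polynomial k) (RatFunc k))) α P = 0 := hα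
    have hPyα : Polynomial.eval₂ (φ0.comp (algebraMap (Polynomial k) (RatFunc k))) α
        (Polynomial.derivative P) = 0 := hzero
    rw [hPα, hPyα] at h
    simp at h
  have hroot : ∀ α : K, E P α = 0 →
      E (Polynomial.derivative P) α * d α = - E (coeffDeriv P) α := by
    intro α hα
    have h := hevald P α
    rw [hα, hd0] at h
    linear_combination -h
  -- the main induction, in shifted form
  have main : ∀ j : ℕ, ∃ C : Polynomial (Polynomial k),
      ∀ α : K, E P α = 0 →
        d^[j + 1] α = E C α / (E (Polynomial.derivative P) α) ^ (2 * j + 1) := by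
    intro j
    induction j with
    | zero =>
      refine ⟨-(coeffDeriv P), fun α hα => ?_⟩
      have hq := hPy α hα
      have h := hroot α hα
      have hneg : E (-(coeffDeriv P)) α = - E (coeffDeriv P) α := by
        simp [hE]
      rw [Function.iterate_one, hneg]
      norm_num
      rw [eq_div_iff hq]
      linear_combination h
    | succ j ih =>
      obtain ⟨C, hC⟩ := ih
      set Py : Polynomial (Polynomial k) := Polynomial.derivative P with hPydef
      refine ⟨(coeffDeriv C * Py - Polynomial.derivative C * coeffDeriv P) * Py -
        ((2 * j + 1 : ℕ) : Polynomial (Polynomial k)) * C *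
          (coeffDeriv Py * Py - Polynomial.derivative Py * coeffDeriv P), fun α hα => ?_⟩
      have hq : E Py α ≠ 0 := hPy α hα
      set q : K := E Py α with hqdef
      set N : K := E C α with hNdef
      have hdα : q * d α = - E (coeffDeriv P) α := hroot α hα
      have hdN : q * d N = E (coeffDeriv C) α * q - E (Polynomial.derivative C) α *
          E (coeffDeriv P) α := by
        rw [hNdef, hevald C α]
        rw [mul_add]
        have h1 : q * (E (Polynomial.derivative C) α * d α) =
            E (Polynomial.derivative C) α * (q * d α) := by ring
        rw [h1, hdα]
        ring
      have hdq : q * d q = E (coeffDeriv Py) α * q - E (Polynomial.derivative Py) α *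
          E (coeffDeriv P) α := by
        rw [hqdef, hevald Py α]
        rw [mul_add]
        have h1 : q * (E (Polynomial.derivative Py) α * d α) =
            E (Polynomial.derivative Py) α * (q * d α) := by ring
        rw [h1, hdα]
        ring
      have hiter : d^[j + 1 + 1] α = d (d^[j + 1] α) := Function.iterate_succ_apply' d (j + 1) α
      rw [hiter, hC α hα]
      have hqpow : (q : K) ^ (2 * j + 1) ≠ 0 := pow_ne_zero _ hq
      rw [hquot N (q ^ (2 * j + 1)) hqpow]
      have hdqpow : d (q ^ (2 * j + 1)) = ((2 * j : ℕ) + 1 : K) * q ^ (2 * j) * d q :=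
        hdpow q (2 * j)
      rw [hdqpow]
      -- evaluate the new numerator polynomial
      have hEnum : E ((coeffDeriv C * Py - Polynomial.derivative C * coeffDeriv P) * Py -
          ((2 * j + 1 : ℕ) : Polynomial (Polynomial k)) * C *
            (coeffDeriv Py * Py - Polynomial.derivative Py * coeffDeriv P)) α =
          (E (coeffDeriv C) α * q - E (Polynomial.derivative C) α * E (coeffDeriv P) α) * q -
          ((2 * j + 1 : ℕ) : K) * N *
            (E (coeffDeriv Py) α * q - E (Polynomial.derivative Py) α * E (coeffDeriv P) α) := by
        simp only [hE, Polynomial.eval₂_sub, Polynomial.eval₂_mul, Polynomial.eval₂_natCast]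
        rfl
      rw [hEnum]
      rw [div_eq_div_iff (pow_ne_zero 2 hqpow) (pow_ne_zero _ hq)]
      have hexp1 : 2 * (j + 1) + 1 = 2 * j + 3 := by ring
      rw [hexp1]
      push_cast
      linear_combination (q ^ (2 * j) * q ^ (2 * j) * q ^ 3) * hdN -
        ((2 * (j : K) + 1) * N * q ^ (2 * j) * q ^ (2 * j) * q ^ 2) * hdq
  intro i hi
  obtain ⟨j, rfl⟩ := Nat.exists_eq_add_of_le hi
  obtain ⟨C, hC⟩ := main j
  refine ⟨C, fun α hα => ?_⟩
  have h1 : 1 + j = j + 1 := by ring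
  have h2 : 2 * (j + 1) - 1 = 2 * j + 1 := by omega
  rw [h1, h2]
  exact hC α hα
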